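/- In the Verma module M(λ) over U_q(g) for a symmetrizable Kac-Moody algebra g, extended by allowing integer powers of F_i (the module U_q^−[F_i^{−1}] v_λ), the action of E_j satisfies E_j F_i^m v_λ = δ_{ij} {m} · ((q_i^{λ_i − m + 1} − q_i^{−λ_i + m − 1})/(q_i − q_i^{−1})) F_i^{m−1} v_λ for all m ∈ ℤ, where {m} = (q_i^m − q_i^{−m})/(q_i − q_i^{−1}). -/

import Mathlib

/-- The symmetric q-number `{m} = (p^m - p^{-m})/(p - p^{-1})` (integer powers). -/
noncomputable def symQNumZ (p : ℂ) (m : ℤ) : ℂ := (p ^ m - p ^ (-m)) / (p - p⁻¹)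

/-- Commutation of an endomorphism with all integer powers of an invertible endomorphism,
given the basic `q`-commutation relation. -/
lemma commZpowAux {M : Type*} [AddCommGroup M] [Module ℂ M]
    (u : (Module.End ℂ M)ˣ) (A : Module.End ℂ M) (c : ℂ) (hc : c ≠ 0)
    (h : A * (u : Module.End ℂ M) = c • ((u : Module.End ℂ M) * A)) :
    ∀ m : ℤ, A * ((u ^ m : (Module.End ℂ M)ˣ) : Module.End ℂ M)
      = c ^ m • (((u ^ m : (Module.End ℂ M)ˣ) : Module.End ℂ M) * A) := by
  have hinv : A * ((u⁻¹ : (Module.End ℂ M)ˣ) : Module.End ℂ M)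
      = c⁻¹ • (((u⁻¹ : (Module.End ℂ M)ˣ) : Module.End ℂ M) * A) := by
    have h2 : ((u⁻¹ : (Module.End ℂ M)ˣ) : Module.End ℂ M) * (A * u) * ((u⁻¹ : (Module.End ℂ M)ˣ) : Module.End ℂ M)
        = ((u⁻¹ : (Module.End ℂ M)ˣ) : Module.End ℂ M) * A := by
      rw [← mul_assoc, mul_assoc _ (u : Module.End ℂ M) _]
      rw [show ((u : Module.End ℂ M) * ((u⁻¹ : (Module.End ℂ M)ˣ) : Module.End ℂ M)) = 1 from u.mul_inv]
      rw [mul_one]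
    rw [h, mul_smul_comm, smul_mul_assoc, ← mul_assoc,
      show (((u⁻¹ : (Module.End ℂ M)ˣ) : Module.End ℂ M) * (u : Module.End ℂ M)) = 1 from u.inv_mul,
      one_mul] at h2
    rw [← h2, smul_smul, inv_mul_cancel₀ hc, one_smul]
  intro m
  induction m using Int.induction_on with
  | zero => simp
  | succ k ih =>
    rw [zpow_add_one, Units.val_mul, ← mul_assoc, ih, smul_mul_assoc, mul_assoc, h,
      mul_smul_comm, smul_smul, ← mul_assoc, zpow_add_one₀ hc]
  | pred k ih =>
    rw [zpow_sub_one, Units.val_mul, ← mul_assoc, ih, smul_mul_assoc, mul_assoc, hinv,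
      mul_smul_comm, smul_smul, ← mul_assoc, zpow_sub_one₀ hc]

/-- The coefficient appearing in the action of `E_i` on `F_i^m v_λ`. -/
noncomputable def cCoefAux (p L : ℂ) (m : ℤ) : ℂ :=
  symQNumZ p m * (p ^ (L - m + 1) - p ^ (-L + m - 1)) / (p - p⁻¹)

/-- The basic recurrence satisfied by the coefficients `cCoefAux`. -/
lemma cstepAux (p L : ℂ) (hp : p ≠ 0) (hd : p - p⁻¹ ≠ 0) (m : ℤ) :
    cCoefAux p L (m + 1) = cCoefAux p L m +
      (p - p⁻¹)⁻¹ * (p ^ (-2*m) * p ^ L - p ^ (2*m) * (p ^ L)⁻¹) := by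
  have hx : (p ^ L) ≠ 0 := by
    simp [Complex.cpow_eq_zero_iff, hp]
  have key : ∀ b : ℤ, p ^ (L + (b:ℂ)) = p ^ L * p ^ b := by
    intro b; rw [Complex.cpow_add _ _ hp, Complex.cpow_intCast]
  have keyn : ∀ b : ℤ, p ^ (-L + (b:ℂ)) = (p ^ L)⁻¹ * p ^ b := by
    intro b; rw [Complex.cpow_add _ _ hp, Complex.cpow_neg, Complex.cpow_intCast]
  have r1 : L - ((m+1 : ℤ):ℂ) + 1 = L + ((-m : ℤ):ℂ) := by push_cast; ring
  have r2 : -L + ((m+1:ℤ):ℂ) - 1 = -L + ((m:ℤ):ℂ) := by push_cast; ring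
  have r3 : L - (m:ℂ) + 1 = L + ((1 - m : ℤ):ℂ) := by push_cast; ring
  have r4 : -L + (m:ℂ) - 1 = -L + ((m - 1:ℤ):ℂ) := by push_cast; ring
  unfold cCoefAux symQNumZ
  rw [r1, r2, r3, r4, key, key, keyn, keyn]
  have hy : p ^ m ≠ 0 := zpow_ne_zero _ hp
  have z1 : p ^ (m+1) = p ^ m * p := by rw [zpow_add_one₀ hp]
  have z2 : p ^ (-(m+1)) = (p ^ m)⁻¹ * p⁻¹ := by
    rw [show -(m+1) = -m + -1 by ring, zpow_add₀ hp, zpow_neg, zpow_neg, zpow_one]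
  have z3 : p ^ (-m) = (p ^ m)⁻¹ := by rw [zpow_neg]
  have z4 : p ^ (1-m) = p * (p ^ m)⁻¹ := by
    rw [show (1:ℤ)-m = 1 + -m by ring, zpow_add₀ hp, zpow_one, zpow_neg]
  have z5 : p ^ (m-1) = p ^ m * p⁻¹ := by rw [zpow_sub_one₀ hp]
  have z6 : p ^ (-2*m) = (p ^ m)⁻¹ * (p ^ m)⁻¹ := by
    rw [show -2*m = -m + -m by ring, zpow_add₀ hp, zpow_neg]
  have z7 : p ^ (2*m) = p ^ m * p ^ m := by rw [two_mul, zpow_add₀ hp]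
  rw [z1, z2, z3, z4, z5, z6, z7]
  generalize hxe : p ^ L = x at hx ⊢
  generalize hye : p ^ m = y at hy ⊢
  have repl : ∀ e : ℂ, (p - p⁻¹)⁻¹ * e = ((p - p⁻¹) * e) / ((p - p⁻¹) * (p - p⁻¹)) := by
    intro e; rw [mul_div_mul_left _ _ hd, inv_mul_eq_div]
  rw [repl, div_mul_eq_mul_div, div_div, div_mul_eq_mul_div, div_div, ← add_div]
  congr 1
  field_simp
  ring

/-- the action of `E_j` on `F_i^m v_λ` (for all `m ∈ ℤ`) in the extended
Verma module `U_q⁻[F_i⁻¹]v_λ` over the quantum group of a symmetrizable Kac–Moody algebra: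
`E_j F_i^m v_λ = δ_{ij} {m} ((q_i^{λ_i-m+1} - q_i^{-λ_i+m-1})/(q_i - q_i^{-1})) F_i^{m-1} v_λ`. -/
theorem action_on_localized_verma
    (n : ℕ) (a : Fin n → Fin n → ℤ) (d : Fin n → ℤ)
    (hsymmetrizable : ∀ i j, d i * a i j = d j * a j i)
    (hdpos : ∀ i, 0 < d i) (hdiag : ∀ i, a i i = 2)
    (q : ℂ) (hq : q ≠ 0) (hq_not_root : ∀ k : ℕ, 0 < k → q ^ k ≠ 1)
    (M : Type*) [AddCommGroup M] [Module ℂ M]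
    (i : Fin n) (lam : Fin n → ℂ)
    -- operators: `E j`, the invertible action `u` of `F_i`, and `K_i^{±1}`
    (E : Fin n → Module.End ℂ M) (u : (Module.End ℂ M)ˣ)
    (Ki Ki' : Module.End ℂ M)
    (hKKi : Ki * Ki' = 1) (hKiK : Ki' * Ki = 1)
    -- `K_i F_i = q_i^{-a_{ii}} F_i K_i = q_i^{-2} F_i K_i`
    (hKF : Ki * (u : Module.End ℂ M) = ((q ^ d i) ^ (-2 : ℤ)) • ((u : Module.End ℂ M) * Ki))
    (hK'F : Ki' * (u : Module.End ℂ M) = ((q ^ d i) ^ (2 : ℤ)) • ((u : Module.End ℂ M) * Ki'))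
    -- `[E_j, F_i] = δ_{ij} (K_i - K_i^{-1})/(q_i - q_i^{-1})`
    (hEF : ∀ j, E j * (u : Module.End ℂ M) - (u : Module.End ℂ M) * E j =
      if j = i then ((q ^ d i - (q ^ d i)⁻¹)⁻¹) • (Ki - Ki') else 0)
    -- the vacuum vector
    (v : M) (hv : v ≠ 0)
    (hEv : ∀ j, E j v = 0)
    (hKv : Ki v = ((q ^ d i) ^ lam i) • v)
    (hK'v : Ki' v = ((q ^ d i) ^ (-lam i)) • v) :
    ∀ (j : Fin n) (m : ℤ),
      E j (((u ^ m : (Module.End ℂ M)ˣ) : Module.End ℂ M) v) =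
        (if j = i then
          symQNumZ (q ^ d i) m *
            ((q ^ d i) ^ (lam i - m + 1) - (q ^ d i) ^ (-lam i + m - 1)) /
              (q ^ d i - (q ^ d i)⁻¹)
        else 0) • (((u ^ (m - 1) : (Module.End ℂ M)ˣ) : Module.End ℂ M) v) := by
  set p : ℂ := q ^ d i with hpdef
  have hp0 : p ≠ 0 := zpow_ne_zero _ hq
  -- `p - p⁻¹ ≠ 0` since `q` is not a root of unity
  have hδ : p - p⁻¹ ≠ 0 := by
    intro h
    have h1 : p = p⁻¹ := sub_eq_zero.mp h
    have h2 : p * p = 1 := by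
      nth_rewrite 2 [h1]
      exact mul_inv_cancel₀ hp0
    have h3 : q ^ ((d i + d i).toNat) = 1 := by
      rw [← zpow_natCast, Int.toNat_of_nonneg (by have := hdpos i; omega), zpow_add₀ hq,
        ← hpdef]
      exact h2
    exact hq_not_root _ (by have := hdpos i; omega) h3
  have hx0 : (p ^ lam i : ℂ) ≠ 0 := by
    simp [Complex.cpow_eq_zero_iff, hp0]
  -- action of `K_i` and `K_i⁻¹` on `u^m v`
  have hKim : ∀ m : ℤ, Ki (((u ^ m : (Module.End ℂ M)ˣ) : Module.End ℂ M) v)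
      = (p ^ (-2*m) * p ^ lam i) • (((u ^ m : (Module.End ℂ M)ˣ) : Module.End ℂ M) v) := by
    intro m
    have h := commZpowAux u Ki (p ^ (-2:ℤ)) (zpow_ne_zero _ hp0) hKF m
    have e1 : Ki (((u ^ m : (Module.End ℂ M)ˣ) : Module.End ℂ M) v)
        = (Ki * ((u ^ m : (Module.End ℂ M)ˣ) : Module.End ℂ M)) v := rfl
    rw [e1, h]
    rw [LinearMap.smul_apply, Module.End.mul_apply, hKv, map_smul, smul_smul, ← zpow_mul]
  have hKim' : ∀ m : ℤ, Ki' (((u ^ m : (Module.End ℂ M)ˣ) : Module.End ℂ M) v)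
      = (p ^ (2*m) * (p ^ lam i)⁻¹) • (((u ^ m : (Module.End ℂ M)ˣ) : Module.End ℂ M) v) := by
    intro m
    have h := commZpowAux u Ki' (p ^ (2:ℤ)) (zpow_ne_zero _ hp0) hK'F m
    have e1 : Ki' (((u ^ m : (Module.End ℂ M)ˣ) : Module.End ℂ M) v)
        = (Ki' * ((u ^ m : (Module.End ℂ M)ˣ) : Module.End ℂ M)) v := rfl
    rw [e1, h]
    rw [LinearMap.smul_apply, Module.End.mul_apply, hK'v, map_smul, smul_smul, ← zpow_mul,
      Complex.cpow_neg]
  -- injectivity of `u`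
  have hinj : ∀ w₁ w₂ : M, (u : Module.End ℂ M) w₁ = (u : Module.End ℂ M) w₂ → w₁ = w₂ := by
    intro w₁ w₂ hw
    have := congrArg (fun z => ((u⁻¹ : (Module.End ℂ M)ˣ) : Module.End ℂ M) z) hw
    simpa [← Module.End.mul_apply, u.inv_mul] using this
  -- `u^{m+1} = u * u^m` applied to `v`
  have hpow : ∀ m : ℤ, (((u ^ (m+1) : (Module.End ℂ M)ˣ) : Module.End ℂ M) v)
      = (u : Module.End ℂ M) (((u ^ m : (Module.End ℂ M)ˣ) : Module.End ℂ M) v) := by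
    intro m
    rw [show m + 1 = 1 + m by ring, zpow_add, zpow_one, Units.val_mul, Module.End.mul_apply]
  -- the commutator relation for `E i`
  have hEFi : E i * (u : Module.End ℂ M)
      = (u : Module.End ℂ M) * E i + (p - p⁻¹)⁻¹ • (Ki - Ki') := by
    have h := hEF i
    rw [if_pos rfl] at h
    rw [sub_eq_iff_eq_add'] at h
    exact h
  -- the one-step relation, valid for all integers m
  have Estep : ∀ m : ℤ, E i (((u ^ (m+1) : (Module.End ℂ M)ˣ) : Module.End ℂ M) v)
      = (u : Module.End ℂ M) (E i (((u ^ m : (Module.End ℂ M)ˣ) : Module.End ℂ M) v))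
        + ((p - p⁻¹)⁻¹ * (p ^ (-2*m) * p ^ lam i - p ^ (2*m) * (p ^ lam i)⁻¹))
            • (((u ^ m : (Module.End ℂ M)ˣ) : Module.End ℂ M) v) := by
    intro m
    rw [hpow m, ← Module.End.mul_apply, hEFi]
    rw [LinearMap.add_apply, Module.End.mul_apply, LinearMap.smul_apply, LinearMap.sub_apply,
      hKim m, hKim' m, ← sub_smul, smul_smul]
  -- the key claim, by two-sided induction
  have H : ∀ m : ℤ, E i (((u ^ m : (Module.End ℂ M)ˣ) : Module.End ℂ M) v)
      = cCoefAux p (lam i) m • (((u ^ (m-1) : (Module.End ℂ M)ˣ) : Module.End ℂ M) v) := by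
    intro m
    induction m using Int.induction_on with
    | zero =>
      have hc : cCoefAux p (lam i) 0 = 0 := by
        simp [cCoefAux, symQNumZ]
      rw [hc, zero_smul]
      simpa using hEv i
    | succ k ih =>
      have h := Estep k
      rw [ih] at h
      rw [h, map_smul, ← Module.End.mul_apply, ← Units.val_mul,
        show (u : (Module.End ℂ M)ˣ) * u ^ ((k:ℤ) - 1) = u ^ (k:ℤ) by
          rw [← zpow_one_add]; norm_num,
        ← add_smul, ← cstepAux p (lam i) hp0 hδ k,
        show (k:ℤ) + 1 - 1 = (k:ℤ) by ring]
    | pred k ih =>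
      have h := Estep (-(k:ℤ)-1)
      rw [show (-(k:ℤ)-1)+1 = -(k:ℤ) by ring, ih] at h
      have hc := cstepAux p (lam i) hp0 hδ (-(k:ℤ)-1)
      rw [show (-(k:ℤ)-1)+1 = -(k:ℤ) by ring] at hc
      -- isolate `u (E i (u^{-k-1} v))`
      have h2 : (u : Module.End ℂ M) (E i (((u ^ (-(k:ℤ)-1) : (Module.End ℂ M)ˣ) : Module.End ℂ M) v))
          = cCoefAux p (lam i) (-(k:ℤ)-1)
              • (((u ^ (-(k:ℤ)-1) : (Module.End ℂ M)ˣ) : Module.End ℂ M) v) := by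
        have h3 := (eq_sub_of_add_eq h.symm)
        rw [← sub_smul] at h3
        rw [h3, hc]
        ring_nf
      apply hinj
      rw [h2, map_smul, ← hpow (-(k:ℤ)-1-1), show (-(k:ℤ)-1-1) + 1 = -(k:ℤ)-1 by ring]
  intro j m
  rcases eq_or_ne j i with rfl | hj
  · rw [if_pos rfl]
    exact H m
  · rw [if_neg hj, zero_smul]
    have hcomm : E j * (u : Module.End ℂ M) = (1:ℂ) • ((u : Module.End ℂ M) * E j) := by
      have h := hEF j
      rw [if_neg hj, sub_eq_zero] at h
      rw [h, one_smul]
    have h := commZpowAux u (E j) 1 one_ne_zero hcomm m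
    have e1 : E j (((u ^ m : (Module.End ℂ M)ˣ) : Module.End ℂ M) v)
        = (E j * ((u ^ m : (Module.End ℂ M)ˣ) : Module.End ℂ M)) v := rfl
    rw [e1, h]
    simp [hEv j]
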